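/- Let A be a nonempty set, ξ : B_{ℓ∞(A)} → ℝ continuous for the weak* topology (i.e., the product topology on [−1,1]^A), and φ a continuous linear functional on ℓ∞(A) with decomposition φ = φ_0 + φ_1 where φ_0 ∈ ℓ1(A) and φ_1 vanishes on all finitely supported elements of ℓ∞(A). If ξ(x*) ≤ |φ(|x*|)| for all x* ∈ B_{ℓ∞(A)}, then ξ(x*) ≤ |φ_0(|x*|)| for all x* ∈ B_{ℓ∞(A)}. -/

import Mathlib

open scoped ENNReal
open scoped Topology

noncomputable section

/-- Positive homogeneity for functions on `ℓ∞(A)` (the dual of `ℓ1(A)`). -/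
def PosHomA {A : Type*} (f : lp (fun _ : A => ℝ) ⊤ → ℝ) : Prop :=
  ∀ (c : ℝ), 0 ≤ c → ∀ x, f (c • x) = c * f x

/-- `x_1*, …, x_n* ∈ ℓ∞(A)` with `sup_{a ∈ A} Σ |x_k*(a)| ≤ 1`. -/
def AdmissibleA {A : Type*} (l : List (lp (fun _ : A => ℝ) ⊤)) : Prop :=
  ∀ a : A, (l.map (fun x => |x a|)).sum ≤ 1

/-- The norm `‖f‖_{FBL[ℓ1(A)]}` (possibly infinite). -/
def fblNormA {A : Type*} (f : lp (fun _ : A => ℝ) ⊤ → ℝ) : ℝ≥0∞ :=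
  ⨆ l : {l : List (lp (fun _ : A => ℝ) ⊤) // AdmissibleA l},
    ENNReal.ofReal ((l.1.map (fun x => |f x|)).sum)

/-- pointwise absolute value on `ℓ∞(A)`. -/
def lpAbs {A : Type*} (x : lp (fun _ : A => ℝ) ⊤) : lp (fun _ : A => ℝ) ⊤ :=
  ⟨fun a => |x a|, by
    have h2 : Memℓp (fun a => |(x : _ → ℝ) a|) ⊤ := by
      have h := lp.memℓp x
      rw [memℓp_infty_iff] at h ⊢
      simpa [Real.norm_eq_abs, abs_abs] using h
    exact h2⟩

/-- The inclusion of the product ball `[-1,1]^A` into `ℓ∞(A)`. -/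
def ballToLp {A : Type*} (x : {x : A → ℝ // ∀ a, |x a| ≤ 1}) : lp (fun _ : A => ℝ) ⊤ :=
  ⟨x.1, by
    have h2 : Memℓp x.1 ⊤ := memℓp_infty ⟨1, by
      rintro r ⟨a, rfl⟩
      simpa [Real.norm_eq_abs] using x.2 a⟩
    exact h2⟩

/-- if `ξ : B_{ℓ∞(A)} → ℝ` is continuous for the product topology on `[-1,1]^A`
and `ξ(x*) ≤ |φ(|x*|)|` on the ball, where `φ = φ₀ + φ₁` with `φ₀ ∈ ℓ1(A)` and `φ₁` vanishing
on finitely supported elements, then `ξ(x*) ≤ |φ₀(|x*|)|` on the ball. -/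
theorem stmt14 {A : Type*} [Nonempty A]
    (ξ : {x : A → ℝ // ∀ a, |x a| ≤ 1} → ℝ) (hξ : Continuous ξ)
    (φ : lp (fun _ : A => ℝ) ⊤ →L[ℝ] ℝ)
    (φ₀ : A → ℝ) (hφ₀ : Summable fun a => |φ₀ a|)
    (φ₁ : lp (fun _ : A => ℝ) ⊤ →L[ℝ] ℝ)
    (hdecomp : ∀ x : lp (fun _ : A => ℝ) ⊤, φ x = (∑' a, φ₀ a * x a) + φ₁ x)
    (hvanish : ∀ x : lp (fun _ : A => ℝ) ⊤,
      (Function.support (x : A → ℝ)).Finite → φ₁ x = 0)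
    (hle : ∀ x : {x : A → ℝ // ∀ a, |x a| ≤ 1}, ξ x ≤ |φ (lpAbs (ballToLp x))|) :
    ∀ x : {x : A → ℝ // ∀ a, |x a| ≤ 1}, ξ x ≤ abs (∑' a, φ₀ a * |x.1 a|) := by
  intro x
  classical
  set f : A → ℝ := fun a => φ₀ a * |x.1 a| with hf
  have hsum : Summable f := by
    apply Summable.of_norm_bounded hφ₀
    intro a
    simp only [f, Real.norm_eq_abs, abs_mul, abs_abs]
    exact mul_le_of_le_one_right (abs_nonneg _) (x.2 a)
  have hxb : ∀ F : Finset A, ∀ a, |(fun a => if a ∈ F then x.1 a else 0) a| ≤ 1 := by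
    intro F a; dsimp only; split
    · exact x.2 a
    · simp
  set xF : Finset A → {x : A → ℝ // ∀ a, |x a| ≤ 1} :=
    fun F => ⟨fun a => if a ∈ F then x.1 a else 0, hxb F⟩ with hxF
  have htend : Filter.Tendsto xF Filter.atTop (𝓝 x) := by
    rw [tendsto_subtype_rng, tendsto_pi_nhds]
    intro a
    apply Filter.Tendsto.congr' _ (tendsto_const_nhds (x := x.1 a))
    filter_upwards [Filter.eventually_ge_atTop {a}] with F hF
    simp [xF, Finset.singleton_subset_iff.mp hF]
  have hξt : Filter.Tendsto (fun F => ξ (xF F)) Filter.atTop (𝓝 (ξ x)) :=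
    (hξ.tendsto x).comp htend
  have hst : Filter.Tendsto (fun F : Finset A => |∑ a ∈ F, f a|) Filter.atTop
      (𝓝 |∑' a, f a|) :=
    (continuous_abs.tendsto _).comp hsum.hasSum
  refine le_of_tendsto_of_tendsto' hξt hst ?_
  intro F
  have h1 := hle (xF F)
  have hcoe : ∀ a, (lpAbs (ballToLp (xF F)) : A → ℝ) a = if a ∈ F then |x.1 a| else 0 := by
    intro a
    simp [lpAbs, ballToLp, xF, apply_ite abs]
  have h2 : φ (lpAbs (ballToLp (xF F))) = ∑ a ∈ F, f a := by
    rw [hdecomp, hvanish, add_zero]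
    · rw [tsum_eq_sum (s := F)]
      · exact Finset.sum_congr rfl fun a ha => by rw [hcoe a, if_pos ha]
      · intro a ha; rw [hcoe a, if_neg ha, mul_zero]
    · apply Set.Finite.subset F.finite_toSet
      intro a ha
      simp only [Function.mem_support, hcoe a] at ha
      simp only [Finset.mem_coe] at *
      by_contra h
      exact ha (if_neg h)
  rw [h2] at h1
  exact h1
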